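/- Let σ₀, σ₁ : ℝ → ℂ be twice continuously differentiable on [0,1] and let y : ℝ → ℂ be five times differentiable on [0,1]. Define the quasi-derivatives y^[1] := y', y^[2] := y'', y^[3] := y''' − σ₁·y + σ₀·y', y^[4] := (y^[3])' + σ₀·y'', y^[5] := (y^[4])' + σ₁·y''. Then for every x ∈ [0,1], y^[5](x) = y^{(5)}(x) + (σ₀·y'')'(x) + (σ₀·y')''(x) − (σ₁'·y)'(x) − σ₁'(x)·y'(x). That is, for classical coefficients, the quasi-derivative scheme generated by the 5×5 associated matrix with rows (0,1,0,0,0), (0,0,1,0,0), (σ₁, −σ₀, 0, 1, 0), (0, 0, −σ₀, 0, 1), (0, 0, −σ₁, 0, 0) realizes the fifth-order differential expression ℓ₅(y) = y^{(5)} + (p y'')' + (p y')'' + (q y)' + q y' with p = σ₀ and q = −σ₁'. -/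

import Mathlib

open Set

/-- Derivative on the interval `[0,1]` (one-sided at the endpoints). -/
noncomputable def D (f : ℝ → ℂ) : ℝ → ℂ := derivWithin f (Set.Icc 0 1)

/-- Let `σ₀, σ₁` be twice continuously differentiable on `[0,1]` and `y`
five times differentiable on `[0,1]`. Define the quasi-derivatives
`y⁽¹⁾ := y'`, `y⁽²⁾ := y''`, `y⁽³⁾ := y''' - σ₁·y + σ₀·y'`,
`y⁽⁴⁾ := (y⁽³⁾)' + σ₀·y''`, `y⁽⁵⁾ := (y⁽⁴⁾)' + σ₁·y''`.
Then for every `x ∈ [0,1]`,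
`y⁽⁵⁾(x) = y⁗'(x) + (σ₀·y'')'(x) + (σ₀·y')''(x) - (σ₁'·y)'(x) - σ₁'(x)·y'(x)`,
i.e. the quasi-derivative scheme generated by the 5×5 associated matrix realizes the
fifth-order expression `ℓ₅(y) = y⁽⁵⁾ + (p y'')' + (p y')'' + (q y)' + q y'` with
`p = σ₀`, `q = -σ₁'`. -/
theorem statement6 (s0 s1 y : ℝ → ℂ)
    (hs0 : DifferentiableOn ℝ s0 (Icc 0 1))
    (hs0' : DifferentiableOn ℝ (D s0) (Icc 0 1))
    (hs0'' : ContinuousOn (D (D s0)) (Icc 0 1))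
    (hs1 : DifferentiableOn ℝ s1 (Icc 0 1))
    (hs1' : DifferentiableOn ℝ (D s1) (Icc 0 1))
    (hs1'' : ContinuousOn (D (D s1)) (Icc 0 1))
    (hy : DifferentiableOn ℝ y (Icc 0 1))
    (hy1 : DifferentiableOn ℝ (D y) (Icc 0 1))
    (hy2 : DifferentiableOn ℝ (D (D y)) (Icc 0 1))
    (hy3 : DifferentiableOn ℝ (D (D (D y))) (Icc 0 1))
    (hy4 : DifferentiableOn ℝ (D (D (D (D y)))) (Icc 0 1))
    (qy3 qy4 qy5 : ℝ → ℂ)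
    (hqy3 : qy3 = fun x => D (D (D y)) x - s1 x * y x + s0 x * D y x)
    (hqy4 : qy4 = fun x => D qy3 x + s0 x * D (D y) x)
    (hqy5 : qy5 = fun x => D qy4 x + s1 x * D (D y) x) :
    ∀ x ∈ Icc (0:ℝ) 1,
      qy5 x = D (D (D (D (D y)))) x
        + D (fun t => s0 t * D (D y) t) x
        + D (D (fun t => s0 t * D y t)) x
        - D (fun t => D s1 t * y t) x
        - D s1 x * D y x := by
  intro x hx
  have hU : UniqueDiffOn ℝ (Icc (0:ℝ) 1) := uniqueDiffOn_Icc (by norm_num)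
  -- product rule helper
  have hmul : ∀ (f g : ℝ → ℂ), DifferentiableOn ℝ f (Icc 0 1) →
      DifferentiableOn ℝ g (Icc 0 1) → ∀ z ∈ Icc (0:ℝ) 1,
      D (fun t => f t * g t) z = D f z * g z + f z * D g z := by
    intro f g hf hg z hz
    exact derivWithin_mul (hf z hz) (hg z hz)
  -- differentiability of products
  have ds1y : DifferentiableOn ℝ (fun t => s1 t * y t) (Icc 0 1) := hs1.mul hy
  have ds0y1 : DifferentiableOn ℝ (fun t => s0 t * D y t) (Icc 0 1) := hs0.mul hy1
  have ds0y2 : DifferentiableOn ℝ (fun t => s0 t * D (D y) t) (Icc 0 1) := hs0.mul hy2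
  have ds1'y : DifferentiableOn ℝ (fun t => D s1 t * y t) (Icc 0 1) := hs1'.mul hy
  have ds1y1 : DifferentiableOn ℝ (fun t => s1 t * D y t) (Icc 0 1) := hs1.mul hy1
  -- D(s1*y) equals s1'*y + s1*y' on the interval, hence differentiable
  have hDs1y : ∀ z ∈ Icc (0:ℝ) 1,
      D (fun t => s1 t * y t) z = D s1 z * y z + s1 z * D y z := hmul s1 y hs1 hy
  have dDs1y : DifferentiableOn ℝ (D (fun t => s1 t * y t)) (Icc 0 1) :=
    DifferentiableOn.congr (ds1'y.add ds1y1) hDs1y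
  have hDs0y1 : ∀ z ∈ Icc (0:ℝ) 1,
      D (fun t => s0 t * D y t) z = D s0 z * D y z + s0 z * D (D y) z := hmul s0 (D y) hs0 hy1
  have dDs0y1 : DifferentiableOn ℝ (D (fun t => s0 t * D y t)) (Icc 0 1) :=
    DifferentiableOn.congr ((hs0'.mul hy1).add (hs0.mul hy2)) hDs0y1
  -- qy3 and its derivative
  have dqy3 : DifferentiableOn ℝ qy3 (Icc 0 1) := by
    rw [hqy3]; exact (hy3.sub ds1y).add ds0y1
  have hDqy3 : ∀ z ∈ Icc (0:ℝ) 1,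
      D qy3 z = D (D (D (D y))) z - D (fun t => s1 t * y t) z + D (fun t => s0 t * D y t) z := by
    intro z hz
    rw [hqy3]
    show derivWithin (fun t => D (D (D y)) t - s1 t * y t + s0 t * D y t) (Icc 0 1) z = _
    rw [derivWithin_fun_add (f := fun t => D (D (D y)) t - s1 t * y t) ((hy3 z hz).sub (ds1y z hz)) (ds0y1 z hz),
        derivWithin_fun_sub (hy3 z hz) (ds1y z hz)]
    rfl
  have dDqy3 : DifferentiableOn ℝ (D qy3) (Icc 0 1) :=
    DifferentiableOn.congr ((hy4.sub dDs1y).add dDs0y1) hDqy3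
  -- second derivative of qy3
  have hDDqy3 : D (D qy3) x
      = D (D (D (D (D y)))) x - D (D (fun t => s1 t * y t)) x + D (D (fun t => s0 t * D y t)) x := by
    have e1 : D (D qy3) x = derivWithin (fun z => D (D (D (D y))) z
        - D (fun t => s1 t * y t) z + D (fun t => s0 t * D y t) z) (Icc 0 1) x :=
      derivWithin_congr hDqy3 (hDqy3 x hx)
    rw [e1, derivWithin_fun_add (f := fun z => D (D (D (D y))) z - D (fun t => s1 t * y t) z) ((hy4 x hx).sub (dDs1y x hx)) (dDs0y1 x hx),
        derivWithin_fun_sub (hy4 x hx) (dDs1y x hx)]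
    rfl
  -- second derivative of s1*y
  have hDDs1y : D (D (fun t => s1 t * y t)) x
      = D (fun t => D s1 t * y t) x + (D s1 x * D y x + s1 x * D (D y) x) := by
    have e1 : D (D (fun t => s1 t * y t)) x
        = derivWithin (fun z => D s1 z * y z + s1 z * D y z) (Icc 0 1) x :=
      derivWithin_congr hDs1y (hDs1y x hx)
    rw [e1, derivWithin_fun_add (ds1'y x hx) (ds1y1 x hx)]
    show D (fun z => D s1 z * y z) x + D (fun z => s1 z * D y z) x = _
    rw [hmul s1 (D y) hs1 hy1 x hx]
  -- derivative of qy4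
  have hDqy4 : D qy4 x = D (D qy3) x + D (fun t => s0 t * D (D y) t) x := by
    rw [hqy4]
    exact derivWithin_add (dDqy3 x hx) (ds0y2 x hx)
  rw [hqy5]
  simp only [hDqy4, hDDqy3, hDDs1y]
  ring
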